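/- Let g : ℝⁿ → ℝᵐ be locally Lipschitz, let U ⊆ ℝⁿ be open and nonempty, and let N ⊆ ℝⁿ be a Lebesgue-null set with N_g ⊆ N. If there exists b > 0 such that ‖(dg)(z)‖ ≤ b for all z ∈ U ∖ N, then ‖g(z₁) − g(z₂)‖ ≤ b‖z₁ − z₂‖ for all z₁, z₂ ∈ ℝⁿ such that the segment [z₁,z₂] is contained in U. -/

import Mathlib

open Filter Set MeasureTheory

noncomputable section

abbrev Euc (k : ℕ) : Type := EuclideanSpace ℝ (Fin k)

section Aux

open Metric
open scoped Topology NNReal ENNReal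


/-- 1D a.e. mean value inequality. -/
theorem oneDimMVT {E : Type*} [NormedAddCommGroup E] [NormedSpace ℝ E] (f : ℝ → E) (K C : ℝ)
    (hK : 0 ≤ K) (hC : 0 ≤ C) (hfc : ContinuousOn f (Icc 0 1))
    (δL : ℝ) (hδL : 0 < δL)
    (hlip : ∀ s ∈ Icc (0:ℝ) 1, ∀ t ∈ Icc (0:ℝ) 1, |s - t| < δL → ‖f s - f t‖ ≤ K * |s - t|)
    (S : Set ℝ) (hS : volume S = 0)
    (hd : ∀ t ∈ Icc (0:ℝ) 1, t ∉ S → ∃ L, HasDerivAt f L t ∧ ‖L‖ ≤ C) :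
    ‖f 1 - f 0‖ ≤ C := by
  refine le_of_forall_pos_le_add fun ε' hε' => ?_
  set ε : ℝ := ε' / (K + C + 2) with hεdef
  have hKC2 : (0:ℝ) < K + C + 2 := by linarith
  have hε : 0 < ε := div_pos hε' hKC2
  -- open set of small measure containing S
  obtain ⟨O, hSO, hOopen, hOlt⟩ :=
    Set.exists_isOpen_lt_of_lt S (ENNReal.ofReal ε) (by rw [hS]; exact ENNReal.ofReal_pos.2 hε)
  have hOfin : volume O ≠ ⊤ := (hOlt.trans ENNReal.ofReal_lt_top).ne
  set mO : ℝ → ℝ := fun t => (volume (O ∩ Ioc 0 t)).toReal with hmOdef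
  have hfin : ∀ t : ℝ, volume (O ∩ Ioc 0 t) ≠ ⊤ :=
    fun t => ((measure_mono inter_subset_left).trans_lt hOfin.lt_top).ne
  have hmono : ∀ s t : ℝ, s ≤ t → mO s ≤ mO t := by
    intro s t h
    exact ENNReal.toReal_mono (hfin t)
      (measure_mono (inter_subset_inter_right _ (Ioc_subset_Ioc_right h)))
  have hmO0 : mO 0 = 0 := by simp [hmOdef]
  have hmO1 : mO 1 ≤ ε := by
    have : (volume (O ∩ Ioc 0 1)).toReal ≤ (ENNReal.ofReal ε).toReal :=
      ENNReal.toReal_mono ENNReal.ofReal_ne_top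
        (((measure_mono inter_subset_left).trans_lt hOlt).le)
    simpa [ENNReal.toReal_ofReal hε.le] using this
  have hlipmO : ∀ s t : ℝ, s ≤ t → mO t ≤ mO s + (t - s) := by
    intro s t h
    have hsub : O ∩ Ioc 0 t ⊆ (O ∩ Ioc 0 s) ∪ Ioc s t := by
      rintro u ⟨huO, hu0, hut⟩
      rcases le_or_gt u s with h' | h'
      · exact Or.inl ⟨huO, hu0, h'⟩
      · exact Or.inr ⟨h', hut⟩
    have h1 : volume (O ∩ Ioc 0 t) ≤ volume (O ∩ Ioc 0 s) + volume (Ioc s t) :=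
      (measure_mono hsub).trans (measure_union_le _ _)
    have h2 : volume (Ioc s t) = ENNReal.ofReal (t - s) := Real.volume_Ioc
    have := ENNReal.toReal_mono (by simp [h2, hfin s]) h1
    rw [ENNReal.toReal_add (hfin s) (by simp [h2])] at this
    simpa [h2, ENNReal.toReal_ofReal (sub_nonneg.2 h)] using this
  have hmOlip : LipschitzWith 1 mO := by
    refine LipschitzWith.of_dist_le_mul fun s t => ?_
    rw [Real.dist_eq, Real.dist_eq, NNReal.coe_one, one_mul]
    rcases le_total s t with h | h
    · have h1 := hlipmO s t h
      have h2 := hmono s t h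
      rw [abs_sub_comm (mO s), abs_sub_comm s, abs_of_nonneg (by linarith),
        abs_of_nonneg (by linarith)]; linarith
    · have h1 := hlipmO t s h
      have h2 := hmono t s h
      rw [abs_of_nonneg (by linarith), abs_of_nonneg (by linarith)]; linarith
  have hOlin : ∀ x ∈ O, 0 ≤ x → ∀ z, x ≤ z → Ioc x z ⊆ O → z - x ≤ mO z - mO x := by
    intro x hxO hx0 z hxz hzO
    have hsub : (O ∩ Ioc 0 x) ∪ Ioc x z ⊆ O ∩ Ioc 0 z := by
      rintro u (⟨huO, hu0, hux⟩ | hu)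
      · exact ⟨huO, hu0, hux.trans hxz⟩
      · exact ⟨hzO hu, ⟨hx0.trans_lt hu.1, hu.2⟩⟩
    have hdisj : Disjoint (O ∩ Ioc 0 x) (Ioc x z) := by
      rw [Set.disjoint_left]
      rintro u ⟨_, _, hux⟩ ⟨hxu, _⟩
      exact absurd hux (not_le.2 hxu)
    have h1 : volume (O ∩ Ioc 0 x) + volume (Ioc x z) ≤ volume (O ∩ Ioc 0 z) := by
      rw [← measure_union hdisj measurableSet_Ioc]
      exact measure_mono hsub
    have := ENNReal.toReal_mono (hfin z) h1
    rw [ENNReal.toReal_add (hfin x) (by simp [Real.volume_Ioc])] at this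
    rw [Real.volume_Ioc, ENNReal.toReal_ofReal (sub_nonneg.2 hxz)] at this
    linarith
  set B : ℝ → ℝ := fun t => (C + ε) * t + (K + C + 1) * mO t with hBdef
  have hBc : Continuous B := by
    have := hmOlip.continuous
    fun_prop
  -- the fencing set
  set s : Set ℝ := (fun x => (‖f x - f 0‖, B x)) ⁻¹' {p : ℝ × ℝ | p.1 ≤ p.2} with hsdef
  have hmem : ∀ x, x ∈ s ↔ ‖f x - f 0‖ ≤ B x := fun x => Iff.rfl
  have hclosed : IsClosed (s ∩ Icc 0 1) := by
    rw [inter_comm]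
    have A : ContinuousOn (fun x => (‖f x - f 0‖, B x)) (Icc (0:ℝ) 1) :=
      ((hfc.sub continuousOn_const).norm).prodMk hBc.continuousOn
    exact A.preimage_isClosed_of_isClosed isClosed_Icc
      (isClosed_le continuous_fst continuous_snd)
  have h0 : (0:ℝ) ∈ s := by
    rw [hmem]
    simp [hBdef, hmO0]
  have hgt : ∀ x ∈ s ∩ Ico (0:ℝ) 1, ∀ y ∈ Ioi x, (s ∩ Ioc x y).Nonempty := by
    rintro x ⟨hxs, hx0, hx1⟩ y hy
    rw [mem_Ioi] at hy
    by_cases hxO : x ∈ O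
    · -- Lipschitz case
      obtain ⟨η, hη, hball⟩ := Metric.isOpen_iff.1 hOopen x hxO
      set c : ℝ := min (η / 2) (δL / 2) with hcdef
      have hc : 0 < c := lt_min (by linarith) (by linarith)
      set z : ℝ := min (min y (x + c)) 1 with hzdef
      have hxz : x < z := lt_min (lt_min hy (by linarith)) hx1
      have hzy : z ≤ y := (min_le_left _ _).trans (min_le_left _ _)
      have hzc : z - x ≤ c := by
        have : z ≤ x + c := (min_le_left _ _).trans (min_le_right _ _)
        linarith
      have hz1 : z ≤ 1 := min_le_right _ _
      have hzIcc : z ∈ Icc (0:ℝ) 1 := ⟨by linarith, hz1⟩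
      have hIoc : Ioc x z ⊆ O := by
        intro u hu
        apply hball
        rw [mem_ball, Real.dist_eq, abs_of_nonneg (by linarith [hu.1.le] : (0:ℝ) ≤ u - x)]
        have : u - x ≤ c := by linarith [hu.2]
        calc u - x ≤ c := this
          _ ≤ η / 2 := min_le_left _ _
          _ < η := by linarith
      have hlin := hOlin x hxO hx0 z hxz.le hIoc
      have hflip : ‖f z - f x‖ ≤ K * (z - x) := by
        have h := hlip z hzIcc x ⟨hx0, hx1.le⟩ ?_
        · rwa [abs_of_nonneg (by linarith)] at h
        · rw [abs_of_nonneg (by linarith)]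
          calc z - x ≤ c := hzc
            _ ≤ δL / 2 := min_le_right _ _
            _ < δL := by linarith
      refine ⟨z, ?_, hxz, hzy⟩
      rw [hmem]
      rw [hmem] at hxs
      calc ‖f z - f 0‖ ≤ ‖f z - f x‖ + ‖f x - f 0‖ := norm_sub_le_norm_sub_add_norm_sub _ _ _
        _ ≤ K * (z - x) + B x := add_le_add hflip hxs
        _ ≤ B z := by
            simp only [hBdef]
            nlinarith [hmono x z hxz.le, hε.le, hxz.le]
    · -- derivative case
      have hxS : x ∉ S := fun h => hxO (hSO h)
      obtain ⟨L, hL, hLC⟩ := hd x ⟨hx0, hx1.le⟩ hxS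
      have hslope := hasDerivAt_iff_tendsto_slope.1 hL
      have hnorm : Tendsto (fun z => ‖slope f x z‖) (𝓝[≠] x) (𝓝 ‖L‖) := hslope.norm
      have hev : ∀ᶠ z in 𝓝[≠] x, ‖slope f x z‖ < C + ε :=
        hnorm.eventually_lt_const (by linarith)
      have hev' : ∀ᶠ z in 𝓝[>] x, ‖slope f x z‖ < C + ε :=
        hev.filter_mono (nhdsWithin_mono x fun z hz => ne_of_gt hz)
      have hIoc : Ioc x (min y 1) ∈ 𝓝[>] x :=
        Ioc_mem_nhdsGT_of_mem ⟨le_rfl, lt_min hy hx1⟩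
      obtain ⟨z, hz1, hz2⟩ := (hev'.and (eventually_of_mem hIoc fun z hz => hz)).exists
      have hxz : x < z := hz2.1
      have hzy : z ≤ y := hz2.2.trans (min_le_left _ _)
      have hfz : ‖f z - f x‖ ≤ (C + ε) * (z - x) := by
        have : f z - f x = (z - x) • slope f x z := by
          rw [slope_def_module, smul_inv_smul₀ (by linarith : z - x ≠ 0)]
        rw [this, norm_smul, Real.norm_eq_abs, abs_of_nonneg (by linarith)]
        rw [mul_comm (C + ε)]
        exact mul_le_mul_of_nonneg_left hz1.le (by linarith)
      refine ⟨z, ?_, hxz, hzy⟩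
      rw [hmem]
      rw [hmem] at hxs
      calc ‖f z - f 0‖ ≤ ‖f z - f x‖ + ‖f x - f 0‖ := norm_sub_le_norm_sub_add_norm_sub _ _ _
        _ ≤ (C + ε) * (z - x) + B x := add_le_add hfz hxs
        _ ≤ B z := by
            simp only [hBdef]
            nlinarith [hmono x z hxz.le]
  have hsub := hclosed.Icc_subset_of_forall_exists_gt h0 hgt
  have h1 := hsub ⟨zero_le_one, le_rfl⟩
  rw [hmem] at h1
  calc ‖f 1 - f 0‖ ≤ B 1 := h1
    _ ≤ C + ε + (K + C + 1) * ε := by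
        simp only [hBdef, mul_one]
        nlinarith [hmO1]
    _ = C + ε' := by
        have : (K + C + 2) * ε = ε' := by
          rw [hεdef, mul_div_cancel₀ _ hKC2.ne']
        linarith


theorem smallScaleLip {n m : ℕ} (g : Euc n → Euc m) (hg : LocallyLipschitz g)
    (T : Set (Euc n)) (hT : IsCompact T) :
    ∃ K : ℝ, 0 ≤ K ∧ ∃ δ₀ > (0:ℝ), ∀ y ∈ T, ∀ z : Euc n, dist z y < δ₀ →
      dist (g z) (g y) ≤ K * dist z y := by
  choose Kf tf hmem hlipf using hg
  have hcover : T ⊆ ⋃ x, interior (tf x) :=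
    fun x _ => mem_iUnion.2 ⟨x, mem_interior_iff_mem_nhds.2 (hmem x)⟩
  obtain ⟨F, hF⟩ := hT.elim_finite_subcover (fun x => interior (tf x))
    (fun x => isOpen_interior) hcover
  have hcover' : T ⊆ ⋃ i : F, interior (tf i.1) := by
    intro x hx
    obtain ⟨i, hiF, hxi⟩ := mem_iUnion₂.1 (hF hx)
    exact mem_iUnion.2 ⟨⟨i, hiF⟩, hxi⟩
  obtain ⟨δ₀, hδ₀, hleb⟩ := lebesgue_number_lemma_of_metric hT
    (fun i : F => isOpen_interior) hcover'
  refine ⟨(F.sup Kf : ℝ≥0), (F.sup Kf).coe_nonneg, δ₀, hδ₀, fun y hy z hz => ?_⟩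
  obtain ⟨i, hi⟩ := hleb y hy
  have hyi : y ∈ tf i.1 := interior_subset (hi (mem_ball_self hδ₀))
  have hzi : z ∈ tf i.1 := interior_subset (hi (mem_ball.2 hz))
  calc dist (g z) (g y) ≤ (Kf i.1 : ℝ) * dist z y := (hlipf i.1).dist_le_mul z hzi y hyi
    _ ≤ ((F.sup Kf : ℝ≥0) : ℝ) * dist z y := by
        gcongr
        exact_mod_cast NNReal.coe_le_coe.2 (Finset.le_sup i.2)

end Aux

open Metric
open scoped Topology NNReal ENNReal

set_option maxHeartbeats 2000000 in
/-- If `g : ℝⁿ → ℝᵐ` is locally Lipschitz, `U` is open and nonempty, `N` is a null set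
containing the set of points of non-differentiability of `g`, and `‖(dg)(z)‖ ≤ b` for
all `z ∈ U \ N`, then `‖g z₁ - g z₂‖ ≤ b ‖z₁ - z₂‖` whenever `[z₁, z₂] ⊆ U`. -/
theorem norm_sub_le_of_fderiv_bound {n m : ℕ} (g : Euc n → Euc m)
    (hg : LocallyLipschitz g) (U : Set (Euc n)) (hU : IsOpen U) (hUne : U.Nonempty)
    (N : Set (Euc n)) (hNnull : volume N = 0)
    (hNg : {z : Euc n | ¬ DifferentiableAt ℝ g z} ⊆ N)
    (b : ℝ) (hb : 0 < b)
    (hbd : ∀ z ∈ U \ N, ‖fderiv ℝ g z‖ ≤ b) :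
    ∀ z₁ z₂ : Euc n, segment ℝ z₁ z₂ ⊆ U → ‖g z₁ - g z₂‖ ≤ b * ‖z₁ - z₂‖ := by
  intro z₁ z₂ hseg
  set w : Euc n := z₂ - z₁ with hwdef
  have hsegc : IsCompact (segment ℝ z₁ z₂) := by
    rw [segment_eq_image']
    exact isCompact_Icc.image (continuous_const.add (continuous_id.smul continuous_const))
  obtain ⟨δ, hδ, hthick⟩ := hsegc.exists_thickening_subset_open hU hseg
  set T : Set (Euc n) := cthickening (δ / 2) (segment ℝ z₁ z₂) with hTdef
  have hTc : IsCompact T := hsegc.cthickening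
  have hTU : T ⊆ U :=
    (cthickening_subset_thickening' hδ (half_lt_self hδ) _).trans hthick
  obtain ⟨K, hK0, δ₀, hδ₀, hKlip⟩ := smallScaleLip g hg T hTc
  -- null set
  set N' : Set (Euc n) := toMeasurable volume N with hN'def
  have hN'meas : MeasurableSet N' := measurableSet_toMeasurable _ _
  have hN'null : volume N' = 0 := by rw [measure_toMeasurable]; exact hNnull
  have hNN' : N ⊆ N' := subset_toMeasurable _ _
  -- Fubini: a.e. translate meets N' in a null set along the segment direction
  have hA : MeasurableSet {p : Euc n × ℝ | z₁ + p.2 • w + p.1 ∈ N'} := by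
    have hc : Continuous fun p : Euc n × ℝ => z₁ + p.2 • w + p.1 := by fun_prop
    exact hc.measurable hN'meas
  have hA0 : (volume.prod volume) {p : Euc n × ℝ | z₁ + p.2 • w + p.1 ∈ N'} = 0 := by
    rw [Measure.prod_apply_symm hA]
    have hsec : ∀ t : ℝ, volume {a : Euc n | z₁ + t • w + a ∈ N'} = 0 := by
      intro t
      have h1 : {a : Euc n | z₁ + t • w + a ∈ N'}
          = (fun a : Euc n => (z₁ + t • w) + a) ⁻¹' N' := rfl
      rw [h1, measure_preimage_add]
      exact hN'null
    simp [hsec]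
  have hae : ∀ᵐ v : Euc n, volume {t : ℝ | z₁ + t • w + v ∈ N'} = 0 := by
    have := Measure.measure_ae_null_of_prod_null hA0
    filter_upwards [this] with v hv
    exact hv
  refine le_of_forall_pos_le_add fun ε' hε' => ?_
  -- continuity radii
  have hgc : Continuous g := hg.continuous
  obtain ⟨d₁, hd₁, hcont₁⟩ := Metric.continuousAt_iff.1 (hgc.continuousAt (x := z₁)) (ε' / 2)
    (by linarith)
  obtain ⟨d₂, hd₂, hcont₂⟩ := Metric.continuousAt_iff.1 (hgc.continuousAt (x := z₂)) (ε' / 2)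
    (by linarith)
  set r : ℝ := min (δ / 2) (min d₁ d₂) with hrdef
  have hr : 0 < r := lt_min (by linarith) (lt_min hd₁ hd₂)
  -- choose a good translate v
  obtain ⟨v, hvball, hvnull⟩ : ∃ v ∈ ball (0 : Euc n) r,
      volume {t : ℝ | z₁ + t • w + v ∈ N'} = 0 := by
    by_contra h
    push_neg at h
    have hsubset : ball (0 : Euc n) r ⊆
        {v : Euc n | ¬ volume {t : ℝ | z₁ + t • w + v ∈ N'} = 0} := fun v hv => h v hv
    have h0 : volume {v : Euc n | ¬ volume {t : ℝ | z₁ + t • w + v ∈ N'} = 0} = 0 :=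
      ae_iff.1 hae
    exact absurd (measure_mono_null hsubset h0)
      (measure_ball_pos volume (0 : Euc n) hr).ne'
  have hvnorm : ‖v‖ < r := by rwa [mem_ball, dist_zero_right] at hvball
  set p : ℝ → Euc n := fun t => z₁ + t • w + v with hpdef
  have hpT : ∀ t ∈ Icc (0:ℝ) 1, p t ∈ T := by
    intro t ht
    have hmem : z₁ + t • w ∈ segment ℝ z₁ z₂ := by
      rw [segment_eq_image']
      exact ⟨t, ht, rfl⟩
    refine mem_cthickening_of_dist_le (p t) (z₁ + t • w) (δ / 2) _ hmem ?_
    have : dist (p t) (z₁ + t • w) = ‖v‖ := by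
      rw [hpdef, dist_eq_norm]
      simp
    rw [this]
    have : r ≤ δ / 2 := min_le_left _ _
    linarith
  have hpU : ∀ t ∈ Icc (0:ℝ) 1, p t ∈ U := fun t ht => hTU (hpT t ht)
  set f : ℝ → Euc m := fun t => g (p t) with hfdef
  have hpcont : Continuous p := by
    apply Continuous.add
    · exact continuous_const.add (continuous_id.smul continuous_const)
    · exact continuous_const
  have key : ‖f 1 - f 0‖ ≤ b * ‖w‖ := by
    refine oneDimMVT f (K * ‖w‖) (b * ‖w‖) (mul_nonneg hK0 (norm_nonneg _))
      (mul_nonneg hb.le (norm_nonneg _)) ((hgc.comp hpcont).continuousOn)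
      (δ₀ / (‖w‖ + 1)) (div_pos hδ₀ (by positivity))
      ?_ {t : ℝ | p t ∈ N'} hvnull ?_
    · -- Lipschitz at small scale
      intro s hs t ht hst
      have hpd : dist (p s) (p t) = |s - t| * ‖w‖ := by
        rw [hpdef, dist_eq_norm]
        have : z₁ + s • w + v - (z₁ + t • w + v) = (s - t) • w := by
          rw [sub_smul]; abel
        rw [this, norm_smul, Real.norm_eq_abs]
      have hlt : dist (p s) (p t) < δ₀ := by
        rw [hpd]
        calc |s - t| * ‖w‖ ≤ |s - t| * (‖w‖ + 1) := by
              gcongr; linarith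
          _ < δ₀ / (‖w‖ + 1) * (‖w‖ + 1) := by
              gcongr
          _ = δ₀ := by field_simp
      have := hKlip (p t) (hpT t ht) (p s) hlt
      calc ‖f s - f t‖ = dist (g (p s)) (g (p t)) := by rw [dist_eq_norm]
        _ ≤ K * dist (p s) (p t) := this
        _ = K * ‖w‖ * |s - t| := by rw [hpd]; ring
    · -- derivative bound a.e.
      intro t ht htS
      have hptN' : p t ∉ N' := htS
      have hdiff : DifferentiableAt ℝ g (p t) := by
        by_contra h
        exact hptN' (hNN' (hNg h))
      have hp : HasDerivAt p w t := by
        have h1 : HasDerivAt (fun t : ℝ => t • w) w t := by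
          simpa using (hasDerivAt_id t).smul_const w
        exact ((h1.const_add z₁).add_const v)
      refine ⟨(fderiv ℝ g (p t)) w, hdiff.hasFDerivAt.comp_hasDerivAt t hp, ?_⟩
      calc ‖(fderiv ℝ g (p t)) w‖ ≤ ‖fderiv ℝ g (p t)‖ * ‖w‖ :=
            (fderiv ℝ g (p t)).le_opNorm w
        _ ≤ b * ‖w‖ := by
            gcongr
            exact hbd (p t) ⟨hpU t ht, fun hN => hptN' (hNN' hN)⟩
  -- assemble
  have hf1 : f 1 = g (z₂ + v) := by
    simp only [hfdef, hpdef, one_smul, hwdef]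
    congr 1
    abel
  have hf0 : f 0 = g (z₁ + v) := by
    simp only [hfdef, hpdef, zero_smul, add_zero]
  have h₁ : dist (g (z₁ + v)) (g z₁) < ε' / 2 := by
    apply hcont₁
    rw [dist_eq_norm]
    simpa using hvnorm.trans_le ((min_le_right _ _).trans (min_le_left _ _))
  have h₂ : dist (g (z₂ + v)) (g z₂) < ε' / 2 := by
    apply hcont₂
    rw [dist_eq_norm]
    simpa using hvnorm.trans_le ((min_le_right _ _).trans (min_le_right _ _))
  have hw12 : ‖w‖ = ‖z₁ - z₂‖ := by rw [hwdef, norm_sub_rev]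
  calc ‖g z₁ - g z₂‖
      ≤ ‖g z₁ - g (z₁ + v)‖ + ‖g (z₁ + v) - g (z₂ + v)‖ + ‖g (z₂ + v) - g z₂‖ := by
        have := norm_sub_le_norm_sub_add_norm_sub (g z₁) (g (z₂ + v)) (g z₂)
        have h2 := norm_sub_le_norm_sub_add_norm_sub (g z₁) (g (z₁ + v)) (g (z₂ + v))
        linarith
    _ ≤ ε' / 2 + b * ‖z₁ - z₂‖ + ε' / 2 := by
        have e1 : ‖g z₁ - g (z₁ + v)‖ < ε' / 2 := by
          rw [norm_sub_rev, ← dist_eq_norm]; exact h₁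
        have e2 : ‖g (z₁ + v) - g (z₂ + v)‖ ≤ b * ‖z₁ - z₂‖ := by
          rw [norm_sub_rev, ← hf1, ← hf0, ← hw12]; exact key
        have e3 : ‖g (z₂ + v) - g z₂‖ < ε' / 2 := by rw [← dist_eq_norm]; exact h₂
        linarith
    _ = b * ‖z₁ - z₂‖ + ε' := by ring
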